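/- Let n ≥ 1 and N = n(n+1)/2, and let {Q̂_α}_{α=1}^N be any orthonormal basis of SM(n). Then for any index α ∈ {1,...,N}, Σ_{β=1}^N ‖[Q̂_α, Q̂_β]‖² ≤ n. -/

import Mathlib

open Matrix BigOperators

/-- The squared Frobenius norm: sum of squares of the entries. -/
noncomputable def frobSq {n : ℕ} (A : Matrix (Fin n) (Fin n) ℝ) : ℝ :=
  ∑ i, ∑ j, (A i j) ^ 2

/-- The commutator of two matrices. -/
def mcomm {n : ℕ} (A B : Matrix (Fin n) (Fin n) ℝ) : Matrix (Fin n) (Fin n) ℝ :=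
  A * B - B * A

section aux

variable {n : ℕ}

/-- Kronecker delta. -/
noncomputable def kd (a b : Fin n) : ℝ := if a = b then 1 else 0

/-- Entries of the symmetrization of the commutator `[A, e_{rs}]`. -/
noncomputable def Sm (A : Matrix (Fin n) (Fin n) ℝ) (r s i j : Fin n) : ℝ :=
  (A i r * kd s j - A s j * kd i r + A j r * kd s i - A s i * kd j r) / 2

lemma key_identity (A B : Matrix (Fin n) (Fin n) ℝ) (hA : A.IsSymm) (hB : B.IsSymm)
    (r s : Fin n) :
    ∑ i, ∑ j, B i j * Sm A r s i j = mcomm A B r s := by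
  have expand : ∀ i j : Fin n, B i j * Sm A r s i j =
      (B i j * A i r * kd s j - B i j * A s j * kd i r
        + B i j * A j r * kd s i - B i j * A s i * kd j r) / 2 := by
    intro i j; simp only [Sm]; ring
  simp only [expand, ← Finset.sum_div, Finset.sum_sub_distrib, Finset.sum_add_distrib]
  have h1 : ∑ i : Fin n, ∑ j : Fin n, B i j * A i r * kd s j
      = ∑ k, B k s * A k r := by
    simp [kd, mul_ite, Finset.sum_ite_eq, Finset.sum_ite_eq']
  have h2 : ∑ i : Fin n, ∑ j : Fin n, B i j * A s j * kd i r
      = ∑ k, B r k * A s k := by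
    rw [Finset.sum_comm]
    simp [kd, mul_ite, ite_mul, Finset.sum_ite_eq, Finset.sum_ite_eq']
  have h3 : ∑ i : Fin n, ∑ j : Fin n, B i j * A j r * kd s i
      = ∑ k, B s k * A k r := by
    rw [Finset.sum_comm]
    simp [kd, mul_ite, ite_mul, Finset.sum_ite_eq, Finset.sum_ite_eq']
  have h4 : ∑ i : Fin n, ∑ j : Fin n, B i j * A s i * kd j r
      = ∑ k, B k r * A s k := by
    simp [kd, mul_ite, ite_mul, Finset.sum_ite_eq, Finset.sum_ite_eq']
  rw [h1, h2, h3, h4]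
  have e1 : ∑ k, B k s * A k r = ∑ k, A r k * B k s := by
    refine Finset.sum_congr rfl fun k _ => ?_
    rw [hA.apply r k]; ring
  have e2 : ∑ k, B r k * A s k = ∑ k, B r k * A k s := by
    refine Finset.sum_congr rfl fun k _ => ?_
    rw [hA.apply k s]
  have e3 : ∑ k, B s k * A k r = ∑ k, A r k * B k s := by
    refine Finset.sum_congr rfl fun k _ => ?_
    rw [hA.apply r k, hB.apply k s]; ring
  have e4 : ∑ k, B k r * A s k = ∑ k, B r k * A k s := by
    refine Finset.sum_congr rfl fun k _ => ?_
    rw [hA.apply k s, hB.apply r k]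
  rw [e1, e2, e3, e4]
  simp only [mcomm, Matrix.sub_apply, Matrix.mul_apply]
  ring

lemma sum_sq_Sm (A : Matrix (Fin n) (Fin n) ℝ) :
    ∑ r : Fin n, ∑ s : Fin n, ∑ i : Fin n, ∑ j : Fin n, (Sm A r s i j)^2
      = ((n : ℝ) + 1) * (∑ i, ∑ j, (A i j)^2) - (∑ i, ∑ j, A i j * A j i)
        - (∑ i, A i i)^2 := by
  have expand : ∀ r s i j : Fin n, (Sm A r s i j)^2 =
      ((A i r * kd s j)^2 + (A s j * kd i r)^2 + (A j r * kd s i)^2 + (A s i * kd j r)^2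
       - 2*((A i r * kd s j)*(A s j * kd i r)) + 2*((A i r * kd s j)*(A j r * kd s i))
       - 2*((A i r * kd s j)*(A s i * kd j r)) - 2*((A s j * kd i r)*(A j r * kd s i))
       + 2*((A s j * kd i r)*(A s i * kd j r)) - 2*((A j r * kd s i)*(A s i * kd j r))) / 4 := by
    intro r s i j; simp only [Sm]; ring
  simp only [expand, ← Finset.sum_div, Finset.sum_sub_distrib, Finset.sum_add_distrib,
    ← Finset.mul_sum]
  have h1 : ∑ r : Fin n, ∑ s : Fin n, ∑ i : Fin n, ∑ j : Fin n, (A i r * kd s j)^2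
      = (n : ℝ) * ∑ i, ∑ j, (A i j)^2 := by
    simp [kd, mul_pow, apply_ite (· ^ (2:ℕ)), mul_ite, ite_mul, Finset.sum_ite_eq,
      Finset.sum_ite_eq', Finset.mul_sum]
    rw [Finset.sum_comm]
  have h2 : ∑ r : Fin n, ∑ s : Fin n, ∑ i : Fin n, ∑ j : Fin n, (A s j * kd i r)^2
      = (n : ℝ) * ∑ i, ∑ j, (A i j)^2 := by
    simp [kd, mul_pow, apply_ite (· ^ (2:ℕ)), mul_ite, ite_mul, Finset.sum_ite_eq,
      Finset.sum_ite_eq', Finset.mul_sum]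
  have h3 : ∑ r : Fin n, ∑ s : Fin n, ∑ i : Fin n, ∑ j : Fin n, (A j r * kd s i)^2
      = (n : ℝ) * ∑ i, ∑ j, (A i j)^2 := by
    simp [kd, mul_pow, apply_ite (· ^ (2:ℕ)), mul_ite, ite_mul, Finset.sum_ite_eq,
      Finset.sum_ite_eq', Finset.mul_sum]
    rw [Finset.sum_comm]
  have h4 : ∑ r : Fin n, ∑ s : Fin n, ∑ i : Fin n, ∑ j : Fin n, (A s i * kd j r)^2
      = (n : ℝ) * ∑ i, ∑ j, (A i j)^2 := by
    simp [kd, mul_pow, apply_ite (· ^ (2:ℕ)), mul_ite, ite_mul, Finset.sum_ite_eq,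
      Finset.sum_ite_eq', Finset.mul_sum]
  have hab : ∑ r : Fin n, ∑ s : Fin n, ∑ i : Fin n, ∑ j : Fin n,
      (A i r * kd s j)*(A s j * kd i r) = (∑ i, A i i)^2 := by
    simp [kd, mul_ite, ite_mul, Finset.sum_ite_eq, Finset.sum_ite_eq',
      Finset.mul_sum, Finset.sum_mul, sq, mul_comm]
  have hac : ∑ r : Fin n, ∑ s : Fin n, ∑ i : Fin n, ∑ j : Fin n,
      (A i r * kd s j)*(A j r * kd s i) = ∑ i, ∑ j, (A i j)^2 := by
    simp [kd, mul_ite, ite_mul, Finset.sum_ite_eq, Finset.sum_ite_eq', sq]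
    rw [Finset.sum_comm]
  have had : ∑ r : Fin n, ∑ s : Fin n, ∑ i : Fin n, ∑ j : Fin n,
      (A i r * kd s j)*(A s i * kd j r) = ∑ i, ∑ j, A i j * A j i := by
    simp [kd, mul_ite, ite_mul, Finset.sum_ite_eq, Finset.sum_ite_eq']
    rw [Finset.sum_comm]
  have hbc : ∑ r : Fin n, ∑ s : Fin n, ∑ i : Fin n, ∑ j : Fin n,
      (A s j * kd i r)*(A j r * kd s i) = ∑ i, ∑ j, A i j * A j i := by
    simp [kd, mul_ite, ite_mul, Finset.sum_ite_eq, Finset.sum_ite_eq']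
  have hbd : ∑ r : Fin n, ∑ s : Fin n, ∑ i : Fin n, ∑ j : Fin n,
      (A s j * kd i r)*(A s i * kd j r) = ∑ i, ∑ j, (A i j)^2 := by
    simp [kd, mul_ite, ite_mul, Finset.sum_ite_eq, Finset.sum_ite_eq', sq]
    rw [Finset.sum_comm]
  have hcd : ∑ r : Fin n, ∑ s : Fin n, ∑ i : Fin n, ∑ j : Fin n,
      (A j r * kd s i)*(A s i * kd j r) = (∑ i, A i i)^2 := by
    simp [kd, mul_ite, ite_mul, Finset.sum_ite_eq, Finset.sum_ite_eq',
      Finset.mul_sum, Finset.sum_mul, sq, mul_comm]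
  rw [h1, h2, h3, h4, hab, hac, had, hbc, hbd, hcd]
  ring

end aux

/-- Lemma 2.4: for any orthonormal basis `{Q̂_α}` of the space of `n×n` real symmetric
matrices (`N = n(n+1)/2`) and any index `α`, `∑_{β=1}^N ‖[Q̂_α, Q̂_β]‖² ≤ n`. -/
theorem commutator_sum_le_n (n N : ℕ) (hn : 1 ≤ n) (hN : N = n * (n + 1) / 2)
    (Q : Fin N → Matrix (Fin n) (Fin n) ℝ) (hsymm : ∀ α, (Q α).IsSymm)
    (horth : ∀ α β, (∑ i, ∑ j, Q α i j * Q β i j) = if α = β then 1 else 0)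
    (α : Fin N) :
    ∑ β, frobSq (mcomm (Q α) (Q β)) ≤ (n : ℝ) := by
  classical
  set A := Q α with hAdef
  have hA : A.IsSymm := hsymm α
  have hT : (∑ i, ∑ j, A i j * A i j) = 1 := by simpa using horth α α
  set v : Fin N → EuclideanSpace ℝ (Fin n × Fin n) :=
    fun β => (WithLp.equiv 2 _).symm (fun p => Q β p.1 p.2) with hv_def
  have hv : Orthonormal ℝ v := by
    rw [orthonormal_iff_ite]
    intro a b
    rw [← horth a b]
    simp [hv_def, PiLp.inner_apply, RCLike.inner_apply, conj_trivial,
      WithLp.equiv_symm_apply, PiLp.toLp_apply, Fintype.sum_prod_type]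
    exact Finset.sum_congr rfl fun i _ => Finset.sum_congr rfl fun j _ => mul_comm _ _
  set X : Fin n → Fin n → EuclideanSpace ℝ (Fin n × Fin n) :=
    fun r s => (WithLp.equiv 2 _).symm (fun p => Sm A r s p.1 p.2) with hX_def
  have hinner : ∀ (β : Fin N) (r s : Fin n),
      (inner ℝ (v β) (X r s) : ℝ) = mcomm A (Q β) r s := by
    intro β r s
    have key := key_identity A (Q β) hA (hsymm β) r s
    simp only [hv_def, hX_def, PiLp.inner_apply, RCLike.inner_apply, conj_trivial,
      WithLp.equiv_symm_apply, PiLp.toLp_apply]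
    rw [Fintype.sum_prod_type]
    rw [← key]
    exact Finset.sum_congr rfl fun i _ => Finset.sum_congr rfl fun j _ => mul_comm _ _
  have hXnorm : ∀ r s : Fin n, ‖X r s‖^2 = ∑ i, ∑ j, (Sm A r s i j)^2 := by
    intro r s
    rw [← real_inner_self_eq_norm_sq]
    simp only [hX_def, PiLp.inner_apply, RCLike.inner_apply, conj_trivial,
      WithLp.equiv_symm_apply, PiLp.toLp_apply]
    rw [Fintype.sum_prod_type]
    refine Finset.sum_congr rfl fun i _ => Finset.sum_congr rfl fun j _ => ?_
    ring
  have step1 : ∑ β, frobSq (mcomm A (Q β))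
      = ∑ r : Fin n, ∑ s : Fin n, ∑ β, (inner ℝ (v β) (X r s) : ℝ)^2 := by
    have : ∀ β : Fin N, frobSq (mcomm A (Q β))
        = ∑ r : Fin n, ∑ s : Fin n, (inner ℝ (v β) (X r s) : ℝ)^2 := by
      intro β
      unfold frobSq
      refine Finset.sum_congr rfl fun r _ => Finset.sum_congr rfl fun s _ => ?_
      rw [hinner β r s]
    rw [Finset.sum_congr rfl fun β _ => this β, Finset.sum_comm]
    exact Finset.sum_congr rfl fun r _ => Finset.sum_comm
  have bessel : ∀ r s : Fin n, ∑ β, (inner ℝ (v β) (X r s) : ℝ)^2 ≤ ‖X r s‖^2 := by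
    intro r s
    have h := hv.sum_inner_products_le (X r s) (s := Finset.univ)
    simpa [Real.norm_eq_abs, sq_abs] using h
  have step2 : ∑ β, frobSq (mcomm A (Q β))
      ≤ ∑ r : Fin n, ∑ s : Fin n, ∑ i, ∑ j, (Sm A r s i j)^2 := by
    rw [step1]
    refine Finset.sum_le_sum fun r _ => Finset.sum_le_sum fun s _ => ?_
    rw [← hXnorm r s]
    exact bessel r s
  have hTsq : (∑ i, ∑ j, (A i j)^2) = 1 := by
    rw [← hT]
    exact Finset.sum_congr rfl fun i _ => Finset.sum_congr rfl fun j _ => by ring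
  have hU : (∑ i, ∑ j, A i j * A j i) = 1 := by
    rw [← hT]
    refine Finset.sum_congr rfl fun i _ => Finset.sum_congr rfl fun j _ => ?_
    rw [hA.apply i j]
  calc ∑ β, frobSq (mcomm A (Q β))
      ≤ ∑ r : Fin n, ∑ s : Fin n, ∑ i, ∑ j, (Sm A r s i j)^2 := step2
    _ = ((n : ℝ) + 1) * (∑ i, ∑ j, (A i j)^2) - (∑ i, ∑ j, A i j * A j i)
        - (∑ i, A i i)^2 := sum_sq_Sm A
    _ ≤ (n : ℝ) := by
        rw [hTsq, hU]
        nlinarith [sq_nonneg (∑ i, A i i)]
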